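/- For the 5-qubit perfect code, the reduced density matrix of any codeword on any single qubit is maximally mixed: for every unit vector |c⟩ in the codespace and every qubit position i ∈ {1,…,5}, Tr_{[5]∖{i}}(|c⟩⟨c|) = Id/2. -/

import Mathlib

open Matrix

/-- The Pauli X matrix. -/
noncomputable def pX : Matrix (Fin 2) (Fin 2) ℂ := !![0, 1; 1, 0]
/-- The Pauli Z matrix. -/
noncomputable def pZ : Matrix (Fin 2) (Fin 2) ℂ := !![1, 0; 0, -1]

/-- Tensor product of five single-qubit operators, as a matrix on `(C²)^{⊗5}`. -/
noncomputable def tp5 (f : Fin 5 → Matrix (Fin 2) (Fin 2) ℂ) :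
    Matrix (Fin 5 → Fin 2) (Fin 5 → Fin 2) ℂ :=
  fun x y => ∏ i, f i (x i) (y i)

/-- The four stabilizer generators XZZXI, IXZZX, XIXZZ, ZXIXZ of the 5-qubit code. -/
noncomputable def stabGen : Fin 4 → Matrix (Fin 5 → Fin 2) (Fin 5 → Fin 2) ℂ :=
  ![tp5 ![pX, pZ, pZ, pX, 1], tp5 ![1, pX, pZ, pZ, pX],
    tp5 ![pX, 1, pX, pZ, pZ], tp5 ![pZ, pX, 1, pX, pZ]]

/-- The element of the stabilizer group indexed by a subset of the generators. -/
noncomputable def stabElem (s : Fin 4 → Bool) : Matrix (Fin 5 → Fin 2) (Fin 5 → Fin 2) ℂ :=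
  (if s 0 then stabGen 0 else 1) * (if s 1 then stabGen 1 else 1) *
    (if s 2 then stabGen 2 else 1) * (if s 3 then stabGen 3 else 1)

/-- The projector `Π = (1/16) Σ_{g ∈ stabilizer group} g` onto the codespace. -/
noncomputable def codeProj : Matrix (Fin 5 → Fin 2) (Fin 5 → Fin 2) ℂ :=
  (1 / 16 : ℂ) • ∑ s : Fin 4 → Bool, stabElem s

/-- The reduced density matrix on qubit `i` of the pure state `|c⟩⟨c|`, i.e. the
partial trace over the four qubits other than `i`. -/
noncomputable def reducedDensity (c : (Fin 5 → Fin 2) → ℂ) (i : Fin 5) :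
    Matrix (Fin 2) (Fin 2) ℂ :=
  fun a b => ∑ x : Fin 5 → Fin 2,
    if x i = 0 then c (Function.update x i a) * star (c (Function.update x i b)) else 0

/-! ### Auxiliary material -/

section Aux

lemma tp5_mul (f g : Fin 5 → Matrix (Fin 2) (Fin 2) ℂ) :
    tp5 f * tp5 g = tp5 (fun i => f i * g i) := by
  funext x y
  show ∑ z : Fin 5 → Fin 2, (∏ i, f i (x i) (z i)) * ∏ i, g i (z i) (y i)
      = ∏ i, (f i * g i) (x i) (y i)
  simp only [Matrix.mul_apply, ← Finset.prod_mul_distrib, Finset.prod_univ_sum,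
    Fintype.piFinset_univ]

lemma tp5_one : tp5 (fun _ => 1) = 1 := by
  funext x y
  show ∏ i, (1 : Matrix (Fin 2) (Fin 2) ℂ) (x i) (y i) = (1 : Matrix _ _ ℂ) x y
  by_cases h : x = y
  · simp [h, Matrix.one_apply]
  · obtain ⟨j, hj⟩ := Function.ne_iff.mp h
    rw [Matrix.one_apply_ne h]
    exact Finset.prod_eq_zero (Finset.mem_univ j) (Matrix.one_apply_ne hj)

lemma tp5_eps (f g : Fin 5 → Matrix (Fin 2) (Fin 2) ℂ) (ε : Fin 5 → ℂ)
    (h : ∀ j, f j = ε j • g j) :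
    tp5 f = (∏ j, ε j) • tp5 g := by
  funext x y
  show ∏ i, f i (x i) (y i) = (∏ j, ε j) * ∏ i, g i (x i) (y i)
  rw [← Finset.prod_mul_distrib]
  exact Finset.prod_congr rfl fun j _ => by rw [h j]; simp

lemma pXX : pX * pX = 1 := by simp [pX, Matrix.mul_fin_two, ← Matrix.one_fin_two]
lemma pZZ : pZ * pZ = 1 := by simp [pZ, Matrix.mul_fin_two, ← Matrix.one_fin_two]
lemma pZX : pZ * pX = (-1 : ℂ) • (pX * pZ) := by simp [pX, pZ, Matrix.mul_fin_two]
lemma pXZ : pX * pZ = (-1 : ℂ) • (pZ * pX) := by rw [pZX]; simp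

/-- The matrix units. -/
noncomputable def eM (b a : Fin 2) : Matrix (Fin 2) (Fin 2) ℂ :=
  fun x y => if x = b ∧ y = a then 1 else 0

lemma pZ_conj_eM (b a : Fin 2) :
    pZ * eM b a * pZ = ((-1 : ℂ) ^ ((b : ℕ) + (a : ℕ))) • eM b a := by
  funext x y
  fin_cases x <;> fin_cases y <;> fin_cases a <;> fin_cases b <;>
    simp [pZ, eM, Matrix.mul_apply, Matrix.vecMul, dotProduct, Fin.sum_univ_two]

lemma pX_conj_eM (b a : Fin 2) :
    pX * eM b a * pX = eM (b + 1) (a + 1) := by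
  funext x y
  fin_cases x <;> fin_cases y <;> fin_cases a <;> fin_cases b <;>
    simp [pX, eM, Matrix.mul_apply, Matrix.vecMul, dotProduct, Fin.sum_univ_two]

/-- The operator acting as `M` on qubit `i` and trivially elsewhere. -/
noncomputable def slot (i : Fin 5) (M : Matrix (Fin 2) (Fin 2) ℂ) :
    Fin 5 → Matrix (Fin 2) (Fin 2) ℂ := fun j => if j = i then M else 1

lemma slot_entry (i : Fin 5) (M : Matrix (Fin 2) (Fin 2) ℂ) (x y : Fin 5 → Fin 2) :
    tp5 (slot i M) x y
      = if Function.update x i (y i) = y then M (x i) (y i) else 0 := by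
  by_cases h : Function.update x i (y i) = y
  · rw [if_pos h]
    have ha : ∀ j, j ≠ i → x j = y j := by
      intro j hj
      have := congrFun h j
      rwa [Function.update_of_ne hj] at this
    show (∏ j, slot i M j (x j) (y j)) = _
    rw [Finset.prod_eq_single i]
    · simp [slot]
    · intro j _ hj
      simp [slot, hj, Matrix.one_apply, ha j hj]
    · simp
  · rw [if_neg h]
    have : ∃ j, ¬ Function.update x i (y i) j = y j := Function.ne_iff.mp h
    obtain ⟨j, hj⟩ := this
    have hji : j ≠ i := by
      rintro rfl; exact hj (Function.update_self _ _ _)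
    rw [Function.update_of_ne hji] at hj
    exact Finset.prod_eq_zero (Finset.mem_univ j)
      (by simp [slot, hji, Matrix.one_apply, hj])

lemma tp5_conj (v : Fin 5 → Matrix (Fin 2) (Fin 2) ℂ) (i : Fin 5)
    (M M' : Matrix (Fin 2) (Fin 2) ℂ) (ε : ℂ)
    (hsq : ∀ j, v j * v j = 1) (h : v i * M * v i = ε • M') :
    tp5 v * tp5 (slot i M) * tp5 v = ε • tp5 (slot i M') := by
  rw [tp5_mul, tp5_mul]
  have : tp5 (fun j => (fun j => v j * slot i M j) j * v j)
      = (∏ j, if j = i then ε else 1) • tp5 (slot i M') := by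
    apply tp5_eps
    intro j
    by_cases hj : j = i
    · subst hj
      simp only [slot, if_pos rfl, if_true]
      exact h
    · simp [slot, hj, hsq j]
  rw [this, Finset.prod_ite_eq' Finset.univ i (fun _ => ε)]
  simp

lemma tp5_herm (v : Fin 5 → Matrix (Fin 2) (Fin 2) ℂ)
    (h : ∀ j a b, star (v j a b) = v j b a) (x y : Fin 5 → Fin 2) :
    star (tp5 v x y) = tp5 v y x := by
  show star (∏ i, v i (x i) (y i)) = ∏ i, v i (y i) (x i)
  rw [star_prod]
  exact Finset.prod_congr rfl fun j _ => h j _ _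

lemma quad_invariant (A : Matrix (Fin 5 → Fin 2) (Fin 5 → Fin 2) ℂ)
    (c : (Fin 5 → Fin 2) → ℂ)
    (hA : A.mulVec c = c) (hH : ∀ x y, star (A x y) = A y x)
    (N : Matrix (Fin 5 → Fin 2) (Fin 5 → Fin 2) ℂ) :
    star c ⬝ᵥ N.mulVec c = star c ⬝ᵥ (A * N * A).mulVec c := by
  symm
  have key : ∀ w, star c ⬝ᵥ A.mulVec w = star c ⬝ᵥ w := by
    intro w
    have : ∀ y, (∑ x, star (c x) * A x y) = star (c y) := by
      intro y
      have := congrFun hA y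
      have h2 := congrArg star this
      rw [Matrix.mulVec, dotProduct] at h2
      rw [← h2, star_sum]
      exact Finset.sum_congr rfl fun x _ => by
        rw [star_mul', hH]; ring
    calc star c ⬝ᵥ A.mulVec w
        = ∑ x, ∑ y, star (c x) * A x y * w y := by
          simp [dotProduct, Matrix.mulVec, Finset.mul_sum, mul_assoc]
      _ = ∑ y, (∑ x, star (c x) * A x y) * w y := by
          rw [Finset.sum_comm]
          exact Finset.sum_congr rfl fun y _ => by rw [Finset.sum_mul]
      _ = star c ⬝ᵥ w := by
          rw [dotProduct]
          exact Finset.sum_congr rfl fun y _ => by rw [this y]; rfl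
  calc star c ⬝ᵥ (A * N * A).mulVec c
      = star c ⬝ᵥ A.mulVec ((N * A).mulVec c) := by
        rw [Matrix.mulVec_mulVec, Matrix.mul_assoc]
    _ = star c ⬝ᵥ (N * A).mulVec c := key _
    _ = star c ⬝ᵥ N.mulVec (A.mulVec c) := by rw [Matrix.mulVec_mulVec]
    _ = star c ⬝ᵥ N.mulVec c := by rw [hA]

/-- The slot vectors of the four stabilizer generators. -/
noncomputable def V : Fin 4 → Fin 5 → Matrix (Fin 2) (Fin 2) ℂ :=
  ![![pX, pZ, pZ, pX, 1], ![1, pX, pZ, pZ, pX],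
    ![pX, 1, pX, pZ, pZ], ![pZ, pX, 1, pX, pZ]]

lemma stabGen_eq (k : Fin 4) : stabGen k = tp5 (V k) := by
  fin_cases k <;> rfl

lemma Vsq (k : Fin 4) (j : Fin 5) : V k j * V k j = 1 := by
  fin_cases k <;> fin_cases j <;> simp [V, pXX, pZZ, Matrix.vecHead, Matrix.vecTail]

lemma Vherm (k : Fin 4) (j : Fin 5) (a b : Fin 2) : star (V k j a b) = V k j b a := by
  have hX : ∀ a b : Fin 2, star (pX a b) = pX b a := by
    intro a b; fin_cases a <;> fin_cases b <;> simp [pX]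
  have hZ : ∀ a b : Fin 2, star (pZ a b) = pZ b a := by
    intro a b; fin_cases a <;> fin_cases b <;> simp [pZ]
  have hI : ∀ a b : Fin 2, star ((1 : Matrix (Fin 2) (Fin 2) ℂ) a b)
      = (1 : Matrix (Fin 2) (Fin 2) ℂ) b a := by
    intro a b; fin_cases a <;> fin_cases b <;> simp
  have hV : V k j = pX ∨ V k j = pZ ∨ V k j = 1 := by
    fin_cases k <;> fin_cases j <;> simp [V, Matrix.vecHead, Matrix.vecTail]
  rcases hV with h | h | h <;> rw [h]
  exacts [hX a b, hZ a b, hI a b]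

lemma tp5_comm (v w : Fin 5 → Matrix (Fin 2) (Fin 2) ℂ) (ε : Fin 5 → ℂ)
    (h : ∀ j, w j * v j = ε j • (v j * w j)) (hε : ∏ j, ε j = 1) :
    tp5 v * tp5 w = tp5 w * tp5 v := by
  rw [tp5_mul, tp5_mul, tp5_eps (fun j => w j * v j) (fun j => v j * w j) ε h, hε, one_smul]

lemma comm10 : stabGen 1 * stabGen 0 = stabGen 0 * stabGen 1 :=
  (tp5_comm ![pX, pZ, pZ, pX, 1] ![1, pX, pZ, pZ, pX] ![1, -1, 1, -1, 1]
    (by intro j; fin_cases j <;> simp [pZX, Matrix.vecHead, Matrix.vecTail])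
    (by simp [Fin.prod_univ_five])).symm

lemma comm20 : stabGen 2 * stabGen 0 = stabGen 0 * stabGen 2 :=
  (tp5_comm ![pX, pZ, pZ, pX, 1] ![pX, 1, pX, pZ, pZ] ![1, 1, -1, -1, 1]
    (by intro j; fin_cases j <;> simp [pZX, Matrix.vecHead, Matrix.vecTail])
    (by simp [Fin.prod_univ_five])).symm

lemma comm30 : stabGen 3 * stabGen 0 = stabGen 0 * stabGen 3 :=
  (tp5_comm ![pX, pZ, pZ, pX, 1] ![pZ, pX, 1, pX, pZ] ![-1, -1, 1, 1, 1]
    (by intro j; fin_cases j <;> simp [pZX, Matrix.vecHead, Matrix.vecTail])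
    (by simp [Fin.prod_univ_five])).symm

lemma comm21 : stabGen 2 * stabGen 1 = stabGen 1 * stabGen 2 :=
  (tp5_comm ![1, pX, pZ, pZ, pX] ![pX, 1, pX, pZ, pZ] ![1, 1, -1, 1, -1]
    (by intro j; fin_cases j <;> simp [pZX, Matrix.vecHead, Matrix.vecTail])
    (by simp [Fin.prod_univ_five])).symm

lemma comm31 : stabGen 3 * stabGen 1 = stabGen 1 * stabGen 3 :=
  (tp5_comm ![1, pX, pZ, pZ, pX] ![pZ, pX, 1, pX, pZ] ![1, 1, 1, -1, -1]
    (by intro j; fin_cases j <;> simp [pZX, Matrix.vecHead, Matrix.vecTail])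
    (by simp [Fin.prod_univ_five])).symm

lemma comm32 : stabGen 3 * stabGen 2 = stabGen 2 * stabGen 3 :=
  (tp5_comm ![pX, 1, pX, pZ, pZ] ![pZ, pX, 1, pX, pZ] ![-1, 1, 1, -1, 1]
    (by intro j; fin_cases j <;> simp [pZX, Matrix.vecHead, Matrix.vecTail])
    (by simp [Fin.prod_univ_five])).symm

lemma gen_sq (k : Fin 4) : stabGen k * stabGen k = 1 := by
  rw [stabGen_eq, tp5_mul,
    show (fun j => V k j * V k j) = (fun _ => (1 : Matrix (Fin 2) (Fin 2) ℂ)) from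
      funext (Vsq k), tp5_one]

lemma comm10' (x) : stabGen 1 * (stabGen 0 * x) = stabGen 0 * (stabGen 1 * x) := by
  rw [← mul_assoc, comm10, mul_assoc]
lemma comm20' (x) : stabGen 2 * (stabGen 0 * x) = stabGen 0 * (stabGen 2 * x) := by
  rw [← mul_assoc, comm20, mul_assoc]
lemma comm30' (x) : stabGen 3 * (stabGen 0 * x) = stabGen 0 * (stabGen 3 * x) := by
  rw [← mul_assoc, comm30, mul_assoc]
lemma comm21' (x) : stabGen 2 * (stabGen 1 * x) = stabGen 1 * (stabGen 2 * x) := by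
  rw [← mul_assoc, comm21, mul_assoc]
lemma comm31' (x) : stabGen 3 * (stabGen 1 * x) = stabGen 1 * (stabGen 3 * x) := by
  rw [← mul_assoc, comm31, mul_assoc]
lemma comm32' (x) : stabGen 3 * (stabGen 2 * x) = stabGen 2 * (stabGen 3 * x) := by
  rw [← mul_assoc, comm32, mul_assoc]
lemma gen_sq' (k : Fin 4) (x) : stabGen k * (stabGen k * x) = x := by
  rw [← mul_assoc, gen_sq, one_mul]

lemma gen_mul_elem (k : Fin 4) (s : Fin 4 → Bool) :
    stabGen k * stabElem s = stabElem (Function.update s k (!(s k))) := by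
  fin_cases k <;>
    cases h0 : s 0 <;> cases h1 : s 1 <;> cases h2 : s 2 <;> cases h3 : s 3 <;>
      simp [stabElem, h0, h1, h2, h3, Function.update, mul_assoc,
        comm10, comm20, comm30, comm21, comm31, comm32,
        comm10', comm20', comm30', comm21', comm31', comm32', gen_sq, gen_sq']

end Aux

section Aux2

lemma flip_invol (k : Fin 4) : Function.Involutive
    (fun s : Fin 4 → Bool => Function.update s k (!(s k))) := by
  intro s
  simp [Function.update_idem, Function.update_self]

lemma gen_mul_proj (k : Fin 4) : stabGen k * codeProj = codeProj := by
  unfold codeProj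
  rw [Matrix.mul_smul, Finset.mul_sum]
  congr 1
  calc (∑ s : Fin 4 → Bool, stabGen k * stabElem s)
      = ∑ s : Fin 4 → Bool, stabElem (Function.update s k (!(s k))) :=
        Finset.sum_congr rfl fun s _ => gen_mul_elem k s
    _ = ∑ s : Fin 4 → Bool, stabElem s :=
        Fintype.sum_bijective _ (flip_invol k).bijective _ _ (fun s => rfl)

end Aux2

section Aux3

lemma fin2_add_self (b : Fin 2) : b + b = 0 := by fin_cases b <;> decide

lemma fin2_add_left_eq_self (u b : Fin 2) : u + b = b ↔ u = 0 := by
  fin_cases u <;> fin_cases b <;> decide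

lemma sum_invol (i : Fin 5) (b : Fin 2) (F : (Fin 5 → Fin 2) → ℂ) :
    (∑ x : Fin 5 → Fin 2, if x i = b then F x else 0)
      = ∑ x : Fin 5 → Fin 2, if x i = 0 then F (Function.update x i b) else 0 := by
  have hinv : Function.Involutive
      (fun x : Fin 5 → Fin 2 => Function.update x i (x i + b)) := by
    intro x
    simp only [Function.update_self, Function.update_idem]
    rw [add_assoc, fin2_add_self, add_zero, Function.update_eq_self]
  symm
  apply Fintype.sum_bijective _ hinv.bijective
  intro x
  simp only [Function.update_self, Function.update_idem]
  by_cases hx : x i = 0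
  · rw [if_pos hx, if_pos (by rw [hx, zero_add]), hx, zero_add]
  · rw [if_neg hx, if_neg fun h => hx ((fin2_add_left_eq_self _ _).mp h)]

end Aux3

section Aux4

lemma rho_entry (c : (Fin 5 → Fin 2) → ℂ) (i : Fin 5) (a b : Fin 2) :
    reducedDensity c i a b = star c ⬝ᵥ (tp5 (slot i (eM b a))).mulVec c := by
  have inner : ∀ x, (tp5 (slot i (eM b a))).mulVec c x
      = if x i = b then c (Function.update x i a) else 0 := by
    intro x
    show (∑ y, tp5 (slot i (eM b a)) x y * c y) = _
    rw [Finset.sum_eq_single (Function.update x i a)]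
    · rw [slot_entry]
      have h1 : Function.update x i (Function.update x i a i) = Function.update x i a := by
        simp
      rw [if_pos h1, Function.update_self]
      by_cases hb : x i = b <;> simp [eM, hb]
    · intro y _ hy
      rw [slot_entry]
      by_cases hcond : Function.update x i (y i) = y
      · rw [if_pos hcond]
        have : ¬(x i = b ∧ y i = a) := by
          rintro ⟨_, h2⟩
          exact hy (by rw [← hcond, h2])
        simp [eM, this]
      · rw [if_neg hcond, zero_mul]
    · simp
  show (∑ x : Fin 5 → Fin 2,
      if x i = 0 then c (Function.update x i a) * star (c (Function.update x i b)) else 0) = _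
  rw [dotProduct]
  calc (∑ x : Fin 5 → Fin 2,
        if x i = 0 then c (Function.update x i a) * star (c (Function.update x i b)) else 0)
      = ∑ x : Fin 5 → Fin 2,
          if x i = 0 then star (c (Function.update x i b))
            * c (Function.update (Function.update x i b) i a) else 0 := by
        refine Finset.sum_congr rfl fun x _ => ?_
        rw [Function.update_idem]
        split <;> [ring; rfl]
    _ = ∑ x : Fin 5 → Fin 2, if x i = b then star (c x) * c (Function.update x i a) else 0 :=
        (sum_invol i b (fun x => star (c x) * c (Function.update x i a))).symm
    _ = ∑ x : Fin 5 → Fin 2, star c x * (tp5 (slot i (eM b a))).mulVec c x := by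
        refine Finset.sum_congr rfl fun x _ => ?_
        rw [inner x]
        show _ = star (c x) * _
        split <;> [rfl; rw [mul_zero]]

/-- Selector of a generator acting as `Z` on qubit `i`. -/
noncomputable def Zsel : Fin 5 → Fin 4 := ![3, 0, 0, 1, 2]
/-- Selector of a generator acting as `X` on qubit `i`. -/
noncomputable def Xsel : Fin 5 → Fin 4 := ![0, 1, 2, 0, 1]

lemma VZ (i : Fin 5) : V (Zsel i) i = pZ := by
  fin_cases i <;> simp [Zsel, V, Matrix.vecHead, Matrix.vecTail]

lemma VX (i : Fin 5) : V (Xsel i) i = pX := by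
  fin_cases i <;> simp [Xsel, V, Matrix.vecHead, Matrix.vecTail]

end Aux4

/-- For the 5-qubit perfect code, the reduced density matrix of any
codeword on any single qubit is maximally mixed: `Tr_{[5]∖{i}}(|c⟩⟨c|) = Id/2`. -/
theorem five_qubit_code_reduced_density_maximally_mixed
    (c : (Fin 5 → Fin 2) → ℂ)
    (hc : codeProj.mulVec c = c)
    (hunit : ∑ x, ‖c x‖ ^ 2 = 1)
    (i : Fin 5) :
    reducedDensity c i = (1 / 2 : ℂ) • (1 : Matrix (Fin 2) (Fin 2) ℂ) := by
  have hgen : ∀ k : Fin 4, (stabGen k).mulVec c = c := by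
    intro k
    conv_lhs => rw [← hc]
    rw [Matrix.mulVec_mulVec, gen_mul_proj, hc]
  have hherm : ∀ (k : Fin 4) (x y), star (stabGen k x y) = stabGen k y x := by
    intro k
    rw [stabGen_eq]
    exact tp5_herm _ (Vherm k)
  have key : ∀ (k : Fin 4) (M M' : Matrix (Fin 2) (Fin 2) ℂ) (ε : ℂ),
      V k i * M * V k i = ε • M' →
      star c ⬝ᵥ (tp5 (slot i M)).mulVec c
        = ε * (star c ⬝ᵥ (tp5 (slot i M')).mulVec c) := by
    intro k M M' ε h
    rw [quad_invariant (stabGen k) c (hgen k) (hherm k), stabGen_eq,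
      tp5_conj (V k) i M M' ε (Vsq k) h, Matrix.smul_mulVec]
    simp [smul_eq_mul, Finset.mul_sum, dotProduct, Pi.smul_apply]
    ring_nf
    exact Finset.sum_congr rfl fun x _ => by ring
  -- off-diagonal entries vanish
  have hoff : ∀ a b : Fin 2, a ≠ b → reducedDensity c i a b = 0 := by
    intro a b hab
    have hsgn : ((-1 : ℂ) ^ ((b : ℕ) + (a : ℕ))) = -1 := by
      fin_cases a <;> fin_cases b <;> simp_all
    have h1 := key (Zsel i) (eM b a) (eM b a) (-1)
      (by rw [VZ]; rw [pZ_conj_eM, hsgn])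
    rw [rho_entry]
    set q := star c ⬝ᵥ (tp5 (slot i (eM b a))).mulVec c with hq
    have h2 : 2 * q = 0 := by linear_combination h1
    exact (mul_eq_zero.mp h2).resolve_left two_ne_zero
  -- the two diagonal entries are equal
  have hdiagEq : reducedDensity c i 0 0 = reducedDensity c i 1 1 := by
    have h1 := key (Xsel i) (eM 0 0) (eM 1 1) 1
      (by rw [VX, pX_conj_eM, one_smul]; norm_num)
    rw [rho_entry, rho_entry]
    simpa using h1
  -- the trace is 1
  have htr : reducedDensity c i 0 0 + reducedDensity c i 1 1 = 1 := by
    have h0 : ∀ b : Fin 2, (∑ x : Fin 5 → Fin 2, if x i = b then c x * star (c x) else 0)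
        = reducedDensity c i b b := by
      intro b
      rw [sum_invol i b (fun x => c x * star (c x))]
      rfl
    have hsplit : (∑ x : Fin 5 → Fin 2, c x * star (c x))
        = reducedDensity c i 0 0 + reducedDensity c i 1 1 := by
      rw [← h0 0, ← h0 1, ← Finset.sum_add_distrib]
      refine Finset.sum_congr rfl fun x _ => ?_
      by_cases hx : x i = 0
      · simp [hx]
      · have hx1 : x i = 1 := by omega
        simp [hx1]
    have hone : (∑ x : Fin 5 → Fin 2, c x * star (c x)) = 1 := by
      have : ∀ x, c x * star (c x) = ((‖c x‖ ^ 2 : ℝ) : ℂ) := by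
        intro x
        rw [Complex.sq_norm]
        exact Complex.mul_conj (c x)
      rw [Finset.sum_congr rfl fun x _ => this x, ← Complex.ofReal_sum, hunit,
        Complex.ofReal_one]
    rw [← hsplit, hone]
  have e0 : reducedDensity c i 0 0 = 1 / 2 := by linear_combination (htr + hdiagEq) / 2
  have e1 : reducedDensity c i 1 1 = 1 / 2 := by linear_combination (htr - hdiagEq) / 2
  funext a b
  fin_cases a <;> fin_cases b
  · simpa [Matrix.smul_apply, Matrix.one_apply] using e0
  · simpa [Matrix.smul_apply, Matrix.one_apply] using hoff 0 1 (by decide)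
  · simpa [Matrix.smul_apply, Matrix.one_apply] using hoff 1 0 (by decide)
  · simpa [Matrix.smul_apply, Matrix.one_apply] using e1
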